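/- Let $n,t$ be positive integers with $t\ge2$, $n\ge2t$, and let $0<b\le 1/t$. For each $\ell\in\{1,\dots,t-1\}$, the $b$-bounded Lagrangian of the graph $F_{t,\ell}(n)$ satisfies $\lambda_b(F_{t,\ell}(n)) \le \binom{2t-1-2\ell}{2}b^2 + \ell b - \frac{\ell^2+\ell}{2}b^2$. -/
import Mathlib


open Finset

/-- Lagrangian polynomial: sum over edges of products of weights. -/
def lagPoly (G : Finset (Finset ℕ)) (x : ℕ → ℝ) : ℝ := ∑ e ∈ G, ∏ i ∈ e, x i

/-- A feasible weight vector on `[n] = {1,…,n}`. -/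
def IsFeasible (n : ℕ) (x : ℕ → ℝ) : Prop :=
  (∀ i, 0 ≤ x i) ∧ ∑ i ∈ Finset.Icc 1 n, x i = 1

/-- Lagrangian of a hypergraph on `[n]`. -/
noncomputable def lag (n : ℕ) (G : Finset (Finset ℕ)) : ℝ :=
  sSup {v : ℝ | ∃ x : ℕ → ℝ, IsFeasible n x ∧ lagPoly G x = v}

/-- `G` is an `r`-graph on the vertex set `{1,…,n}`. -/
def IsGraphOn (n r : ℕ) (G : Finset (Finset ℕ)) : Prop :=
  ∀ e ∈ G, e ⊆ Finset.Icc 1 n ∧ e.card = r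

/-- The compression `π_{ij}(G)`: each edge `f ∪ {j}` with `f` avoiding `i,j` and
`f ∪ {i} ∉ G` is replaced by `f ∪ {i}`. -/
def compress (G : Finset (Finset ℕ)) (i j : ℕ) : Finset (Finset ℕ) :=
  (G.filter fun e => ¬(j ∈ e ∧ i ∉ e ∧ insert i (e.erase j) ∉ G)) ∪
  ((G.filter fun e => j ∈ e ∧ i ∉ e ∧ insert i (e.erase j) ∉ G).image
    fun e => insert i (e.erase j))

/-- `G` contains `t` pairwise disjoint edges. -/
def HasMatching (G : Finset (Finset ℕ)) (t : ℕ) : Prop :=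
  ∃ M : Finset (Finset ℕ), M ⊆ G ∧ M.card = t ∧
    (M : Set (Finset ℕ)).Pairwise fun e f => Disjoint e f

/-- `G` contains a complete `r`-graph on `p` vertices. -/
def HasClique (G : Finset (Finset ℕ)) (p r : ℕ) : Prop :=
  ∃ S : Finset ℕ, S.card = p ∧ ∀ e ⊆ S, e.card = r → e ∈ G

/-- The graph `F_{t,ℓ}(n)`. -/
def Fgraph (t ℓ n : ℕ) : Finset (Finset ℕ) :=
  ((Finset.Icc 1 (2*t - 1 - ℓ)).powersetCard 2) ∪
  (((Finset.Icc 1 ℓ) ×ˢ (Finset.Icc (2*t - ℓ) n)).image fun p => {p.1, p.2})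

/-- The `b`-bounded Lagrangian (equals `0` if no `b`-bounded feasible vector exists,
since `sSup ∅ = 0` in `ℝ`). -/
noncomputable def lagB (n : ℕ) (b : ℝ) (G : Finset (Finset ℕ)) : ℝ :=
  sSup {v : ℝ | ∃ x : ℕ → ℝ, IsFeasible n x ∧ (∀ i, x i ≤ b) ∧ lagPoly G x = v}


lemma sum_powersetCard_two (s : Finset ℕ) (x : ℕ → ℝ) :
    ∑ e ∈ s.powersetCard 2, ∏ i ∈ e, x i
      = ((∑ i ∈ s, x i)^2 - ∑ i ∈ s, (x i)^2) / 2 := by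
  induction s using Finset.induction_on with
  | empty =>
    rw [Finset.powersetCard_eq_empty.mpr (by simp)]; simp
  | @insert a s ha ih =>
    have hdisj : Disjoint (s.powersetCard 2) ((s.powersetCard 1).image (insert a)) := by
      rw [Finset.disjoint_left]
      intro e he he'
      obtain ⟨f, _, rfl⟩ := Finset.mem_image.mp he'
      exact ha ((Finset.mem_powersetCard.mp he).1 (Finset.mem_insert_self a f))
    have hinj : ∀ e ∈ s.powersetCard 1, ∀ f ∈ s.powersetCard 1,
        insert a e = insert a f → e = f := by
      intro e he f hf hef
      have hae : a ∉ e := fun h => ha ((Finset.mem_powersetCard.mp he).1 h)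
      have haf : a ∉ f := fun h => ha ((Finset.mem_powersetCard.mp hf).1 h)
      rw [← Finset.erase_insert hae, ← Finset.erase_insert haf, hef]
    rw [show (2:ℕ) = Nat.succ 1 from rfl, Finset.powersetCard_succ_insert ha,
      Finset.sum_union hdisj, Finset.sum_image hinj]
    have h1 : ∀ e ∈ s.powersetCard 1, ∏ i ∈ insert a e, x i = x a * ∏ i ∈ e, x i := by
      intro e he
      exact Finset.prod_insert (fun h => ha ((Finset.mem_powersetCard.mp he).1 h))
    rw [Finset.sum_congr rfl h1, ← Finset.mul_sum]
    have h2 : ∑ e ∈ s.powersetCard 1, ∏ i ∈ e, x i = ∑ i ∈ s, x i := by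
      rw [Finset.powersetCard_one, Finset.sum_map]
      simp
    rw [h2, ih, Finset.sum_insert ha, Finset.sum_insert ha]
    ring

lemma cross_sum_pair (p m n : ℕ) (hpm : p < m) (x : ℕ → ℝ) :
    ∑ e ∈ ((Finset.Icc 1 p ×ˢ Finset.Icc m n).image fun q => ({q.1, q.2} : Finset ℕ)),
        ∏ i ∈ e, x i
      = (∑ i ∈ Finset.Icc 1 p, x i) * (∑ j ∈ Finset.Icc m n, x j) := by
  have hinj : ∀ q ∈ Finset.Icc 1 p ×ˢ Finset.Icc m n,
      ∀ r ∈ Finset.Icc 1 p ×ˢ Finset.Icc m n,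
      ({q.1, q.2} : Finset ℕ) = {r.1, r.2} → q = r := by
    intro q hq r hr h
    obtain ⟨hq1, hq2⟩ := Finset.mem_product.mp hq
    obtain ⟨hr1, hr2⟩ := Finset.mem_product.mp hr
    rw [Finset.mem_Icc] at hq1 hq2 hr1 hr2
    have h1 : q.1 ∈ ({r.1, r.2} : Finset ℕ) := h ▸ (by simp)
    have h2 : q.2 ∈ ({r.1, r.2} : Finset ℕ) := h ▸ (by simp)
    simp only [Finset.mem_insert, Finset.mem_singleton] at h1 h2
    have : q.1 = r.1 := by omega
    have : q.2 = r.2 := by omega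
    exact Prod.ext ‹q.1 = r.1› ‹q.2 = r.2›
  rw [Finset.sum_image hinj, Finset.sum_product, Finset.sum_mul_sum]
  apply Finset.sum_congr rfl
  intro i hi
  apply Finset.sum_congr rfl
  intro j hj
  rw [Finset.mem_Icc] at hi hj
  exact Finset.prod_pair (by omega)

lemma arith_bound (L K b a β c qA qB : ℝ) (hL : 1 ≤ L) (hK : 1 ≤ K) (hb : 0 < b)
    (h1 : a^2 ≤ L*qA) (h2 : β^2 ≤ K*qB) (ha0 : 0 ≤ a) (ha : a ≤ L*b)
    (hβ0 : 0 ≤ β) (hβ : β ≤ K*b) (hc : a + β + c = 1) (hLb : (L+1)*b ≤ 1) :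
    ((a+β)^2 - (qA+qB))/2 + a*c ≤ K*(K-1)/2*b^2 + L*b - (L^2+L)/2*b^2 := by
  have hc' : c = 1 - a - β := by linarith
  subst hc'
  have hL0 : (0:ℝ) < L := by linarith
  have hK0 : (0:ℝ) < K := by linarith
  have p1 : 0 ≤ (L*b - a)*(2*L - (L+1)*(L*b+a)) := by
    apply mul_nonneg (by linarith)
    nlinarith [mul_nonneg hL0.le hb.le]
  have p2 : 0 ≤ (K-1)*((K*b)^2 - β^2) := by
    apply mul_nonneg (by linarith)
    nlinarith
  have key : 2*L*K*(((a+β)^2 - (qA+qB))/2 + a*(1-a-β))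
      ≤ 2*L*K*(K*(K-1)/2*b^2 + L*b - (L^2+L)/2*b^2) := by
    nlinarith [mul_nonneg hK0.le (sub_nonneg.2 h1), mul_nonneg hL0.le (sub_nonneg.2 h2),
      mul_nonneg hK0.le p1, mul_nonneg hL0.le p2]
  exact le_of_mul_le_mul_left key (by positivity)

theorem bounded_lagrangian_Fgraph (n t ℓ : ℕ) (ht : 2 ≤ t) (hn : 2*t ≤ n)
    (hℓ1 : 1 ≤ ℓ) (hℓ : ℓ ≤ t - 1) (b : ℝ) (hb : 0 < b) (hbt : b ≤ 1/(t:ℝ)) :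
    lagB n b (Fgraph t ℓ n)
      ≤ (((2*t - 1 - 2*ℓ).choose 2 : ℕ) : ℝ) * b^2 + (ℓ:ℝ) * b
        - (((ℓ:ℝ)^2 + (ℓ:ℝ))/2) * b^2 := by
  have hℓt : ℓ + 1 ≤ t := by omega
  have ht0 : (0:ℝ) < (t:ℝ) := by positivity
  have htb : b * (t:ℝ) ≤ 1 := (le_div_iff₀ ht0).mp hbt
  have hℓR : ((ℓ:ℝ) + 1) * b ≤ 1 := by
    have : ((ℓ:ℝ) + 1) ≤ (t:ℝ) := by exact_mod_cast hℓt
    nlinarith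
  have hk1 : 1 ≤ 2*t - 1 - 2*ℓ := by omega
  have hkR : (1:ℝ) ≤ ((2*t - 1 - 2*ℓ : ℕ):ℝ) := by exact_mod_cast hk1
  have hℓm : ℓ ≤ 2*t - 1 - ℓ := by omega
  have hmn : 2*t - 1 - ℓ ≤ n := by omega
  have hIcc1 : ∀ p : ℕ, Finset.Icc 1 p = Finset.Ioc 0 p := by
    intro p; ext i; simp [Finset.mem_Icc, Finset.mem_Ioc]; omega
  apply Real.sSup_le
  · rintro v ⟨x, ⟨hx0, hxsum⟩, hxb, rfl⟩
    have e4 : Finset.Icc (2*t-ℓ) n = Finset.Ioc (2*t - 1 - ℓ) n := by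
      ext i; simp [Finset.mem_Icc, Finset.mem_Ioc]; omega
    have hAB : (∑ i ∈ Finset.Ioc 0 ℓ, x i) + ∑ i ∈ Finset.Ioc ℓ (2*t-1-ℓ), x i
        = ∑ i ∈ Finset.Ioc 0 (2*t-1-ℓ), x i :=
      Finset.sum_Ioc_consecutive x (Nat.zero_le ℓ) hℓm
    have hABq : (∑ i ∈ Finset.Ioc 0 ℓ, (x i)^2) + ∑ i ∈ Finset.Ioc ℓ (2*t-1-ℓ), (x i)^2
        = ∑ i ∈ Finset.Ioc 0 (2*t-1-ℓ), (x i)^2 :=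
      Finset.sum_Ioc_consecutive (fun i => (x i)^2) (Nat.zero_le ℓ) hℓm
    have htot : (∑ i ∈ Finset.Ioc 0 (2*t-1-ℓ), x i) + ∑ i ∈ Finset.Ioc (2*t-1-ℓ) n, x i = 1 := by
      rw [Finset.sum_Ioc_consecutive x (Nat.zero_le _) hmn, ← hIcc1]
      exact hxsum
    have hdisj : Disjoint ((Finset.Icc 1 (2*t-1-ℓ)).powersetCard 2)
        (((Finset.Icc 1 ℓ) ×ˢ (Finset.Icc (2*t-ℓ) n)).image fun p => ({p.1, p.2} : Finset ℕ)) := by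
      rw [Finset.disjoint_left]
      intro e he he'
      obtain ⟨p, hp, rfl⟩ := Finset.mem_image.mp he'
      have hsub := (Finset.mem_powersetCard.mp he).1
      have h2 : p.2 ∈ Finset.Icc 1 (2*t-1-ℓ) := hsub (by simp)
      have hp2 := (Finset.mem_product.mp hp).2
      rw [Finset.mem_Icc] at h2 hp2
      omega
    have hlag : lagPoly (Fgraph t ℓ n) x
        = (((∑ i ∈ Finset.Ioc 0 ℓ, x i) + ∑ i ∈ Finset.Ioc ℓ (2*t-1-ℓ), x i)^2
            - ((∑ i ∈ Finset.Ioc 0 ℓ, (x i)^2) + ∑ i ∈ Finset.Ioc ℓ (2*t-1-ℓ), (x i)^2))/2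
          + (∑ i ∈ Finset.Ioc 0 ℓ, x i) * (∑ i ∈ Finset.Ioc (2*t-1-ℓ) n, x i) := by
      unfold lagPoly Fgraph
      rw [Finset.sum_union hdisj, sum_powersetCard_two, cross_sum_pair ℓ (2*t-ℓ) n (by omega) x,
        hIcc1 (2*t-1-ℓ), hIcc1 ℓ, e4, hAB, hABq]
    rw [hlag]
    have hqA : (∑ i ∈ Finset.Ioc 0 ℓ, x i)^2 ≤ (ℓ:ℝ) * ∑ i ∈ Finset.Ioc 0 ℓ, (x i)^2 := by
      have := sq_sum_le_card_mul_sum_sq (s := Finset.Ioc 0 ℓ) (f := x)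
      simpa [Nat.card_Ioc] using this
    have hqB : (∑ i ∈ Finset.Ioc ℓ (2*t-1-ℓ), x i)^2
        ≤ ((2*t-1-2*ℓ : ℕ):ℝ) * ∑ i ∈ Finset.Ioc ℓ (2*t-1-ℓ), (x i)^2 := by
      have := sq_sum_le_card_mul_sum_sq (s := Finset.Ioc ℓ (2*t-1-ℓ)) (f := x)
      rw [Nat.card_Ioc] at this
      have hc : (2*t-1-ℓ) - ℓ = 2*t-1-2*ℓ := by omega
      rw [hc] at this
      exact this
    have ha0 : 0 ≤ ∑ i ∈ Finset.Ioc 0 ℓ, x i := Finset.sum_nonneg fun i _ => hx0 i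
    have hβ0 : 0 ≤ ∑ i ∈ Finset.Ioc ℓ (2*t-1-ℓ), x i := Finset.sum_nonneg fun i _ => hx0 i
    have haL : (∑ i ∈ Finset.Ioc 0 ℓ, x i) ≤ (ℓ:ℝ) * b := by
      have := Finset.sum_le_card_nsmul (Finset.Ioc 0 ℓ) x b (fun i _ => hxb i)
      simpa [Nat.card_Ioc, nsmul_eq_mul] using this
    have hβK : (∑ i ∈ Finset.Ioc ℓ (2*t-1-ℓ), x i) ≤ ((2*t-1-2*ℓ : ℕ):ℝ) * b := by
      have := Finset.sum_le_card_nsmul (Finset.Ioc ℓ (2*t-1-ℓ)) x b (fun i _ => hxb i)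
      rw [Nat.card_Ioc] at this
      have hc : (2*t-1-ℓ) - ℓ = 2*t-1-2*ℓ := by omega
      rw [hc, nsmul_eq_mul] at this
      exact this
    have hLR : (1:ℝ) ≤ (ℓ:ℝ) := by exact_mod_cast hℓ1
    have main := arith_bound (ℓ:ℝ) ((2*t-1-2*ℓ : ℕ):ℝ) b
      (∑ i ∈ Finset.Ioc 0 ℓ, x i) (∑ i ∈ Finset.Ioc ℓ (2*t-1-ℓ), x i)
      (∑ i ∈ Finset.Ioc (2*t-1-ℓ) n, x i)
      (∑ i ∈ Finset.Ioc 0 ℓ, (x i)^2) (∑ i ∈ Finset.Ioc ℓ (2*t-1-ℓ), (x i)^2)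
      hLR hkR hb hqA hqB ha0 haL hβ0 hβK (by linarith [hAB, htot]) hℓR
    have hcast : (((2*t - 1 - 2*ℓ).choose 2 : ℕ) : ℝ)
        = ((2*t-1-2*ℓ : ℕ):ℝ) * (((2*t-1-2*ℓ : ℕ):ℝ) - 1) / 2 := Nat.cast_choose_two (K := ℝ) (2*t-1-2*ℓ)
    rw [hcast]
    linarith [main]
  · have hℓ0 : (0:ℝ) ≤ (ℓ:ℝ) := by positivity
    have h1 : (0:ℝ) ≤ (((2*t - 1 - 2*ℓ).choose 2 : ℕ) : ℝ) * b^2 := by positivity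
    nlinarith [mul_nonneg (mul_nonneg hℓ0 hb.le) (sub_nonneg.2 hℓR)]
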